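/- arXiv:1911.06129 — 2 statements merged into one kernel-verified Lean document; each statement's English description precedes it below -/
import Mathlib

section
/- If there exists a finite constant c such that p(x)/q(x) ≤ c for all x (densities of P and Q), then there exists α < ∞ (depending only on c) such that D_K(P‖Q) ≤ α·Δ_H(P,Q), where Δ_H is the squared Hellinger distance. -/
open MeasureTheory Real

lemma aux_kl_pointwise (c a b : ℝ) (ha : 0 ≤ a) (hb : 0 ≤ b) (hab : a ≤ c * b) :
    a * Real.log (a / b) - (a - b)
      ≤ (2 * Real.sqrt c + 1) * (Real.sqrt a - Real.sqrt b) ^ 2 := by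
  rcases eq_or_lt_of_le hb with hb0 | hb0
  · have ha0 : a = 0 := le_antisymm (by simpa [← hb0] using hab) ha
    simp [ha0, ← hb0]
  rcases eq_or_lt_of_le ha with ha0 | ha0
  · have hsb : Real.sqrt b ^ 2 = b := Real.sq_sqrt hb
    have hc : 0 ≤ Real.sqrt c := Real.sqrt_nonneg c
    have : (0:ℝ) ≤ 2 * Real.sqrt c * b := by positivity
    simp only [← ha0, Real.sqrt_zero, zero_mul]
    nlinarith [mul_nonneg hc hb, hsb]
  -- a > 0, b > 0
  have hc0 : 0 ≤ c := by nlinarith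
  set s := Real.sqrt a with hs
  set t := Real.sqrt b with ht
  have hs0 : 0 < s := Real.sqrt_pos.2 ha0
  have ht0 : 0 < t := Real.sqrt_pos.2 hb0
  have hsa : s ^ 2 = a := Real.sq_sqrt ha
  have htb : t ^ 2 = b := Real.sq_sqrt hb
  have hst : s ≤ Real.sqrt c * t := by
    rw [hs, ht, ← Real.sqrt_mul hc0]
    exact Real.sqrt_le_sqrt hab
  -- log bound : log (a/b) ≤ 2 * (s/t - 1)
  have hlog : Real.log (a / b) ≤ 2 * (s / t - 1) := by
    have h1 : Real.log (a / b) = 2 * Real.log (s / t) := by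
      rw [Real.log_div (ne_of_gt ha0) (ne_of_gt hb0),
        Real.log_div (ne_of_gt hs0) (ne_of_gt ht0), hs, ht,
        Real.log_sqrt ha, Real.log_sqrt hb]
      ring
    rw [h1]
    have := Real.log_le_sub_one_of_pos (div_pos hs0 ht0)
    linarith
  have h2 : a * Real.log (a / b) ≤ a * (2 * (s / t - 1)) :=
    mul_le_mul_of_nonneg_left hlog ha
  have key : a * (2 * (s / t - 1)) - (a - b) ≤ (2 * Real.sqrt c + 1) * (s - t) ^ 2 := by
    have hdiv : a * (2 * (s / t - 1)) = (2 * s ^ 3 - 2 * s ^ 2 * t) / t := by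
      rw [← hsa]; field_simp
    rw [hdiv, sub_le_iff_le_add, div_le_iff₀ ht0, ← hsa, ← htb]
    nlinarith [mul_nonneg (sq_nonneg (s - t)) (sub_nonneg.2 hst), ht0.le, hs0.le]
  linarith

/-- if p(x)/q(x) ≤ c for all x, then there is α < ∞ (depending only on c)
with D_K(P‖Q) ≤ α · Δ_H(P,Q). -/
theorem kl_le_const_mul_sq_hellinger_of_density_ratio_bounded
    (c : ℝ) :
    ∃ α : ℝ, ∀ {X : Type} [MeasurableSpace X] (ν : Measure X) (p q : X → ℝ),
      Measurable p → Measurable q →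
      (∀ x, 0 ≤ p x) → (∀ x, 0 ≤ q x) →
      (∫ x, p x ∂ν) = 1 → (∫ x, q x ∂ν) = 1 →
      Integrable p ν → Integrable q ν →
      Integrable (fun x => p x * Real.log (p x / q x)) ν →
      (∀ x, p x ≤ c * q x) →
      ∫ x, p x * Real.log (p x / q x) ∂ν
        ≤ α * ∫ x, (Real.sqrt (p x) - Real.sqrt (q x)) ^ 2 ∂ν := by
  refine ⟨2 * Real.sqrt c + 1, ?_⟩
  intro X _ ν p q hmp hmq hp0 hq0 hP hQ hpi hqi hint hle
  set α : ℝ := 2 * Real.sqrt c + 1 with hα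
  -- integrability of the Hellinger integrand
  have hHmeas : Measurable fun x => (Real.sqrt (p x) - Real.sqrt (q x)) ^ 2 :=
    ((hmp.sqrt.sub hmq.sqrt).pow_const 2)
  have hHint : Integrable (fun x => (Real.sqrt (p x) - Real.sqrt (q x)) ^ 2) ν := by
    refine (hpi.add hqi).mono' hHmeas.aestronglyMeasurable ?_
    filter_upwards with x
    have h1 : Real.sqrt (p x) ^ 2 = p x := Real.sq_sqrt (hp0 x)
    have h2 : Real.sqrt (q x) ^ 2 = q x := Real.sq_sqrt (hq0 x)
    have h3 : 0 ≤ Real.sqrt (p x) * Real.sqrt (q x) :=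
      mul_nonneg (Real.sqrt_nonneg _) (Real.sqrt_nonneg _)
    rw [Real.norm_eq_abs, abs_of_nonneg (sq_nonneg _)]
    show (Real.sqrt (p x) - Real.sqrt (q x)) ^ 2 ≤ p x + q x
    nlinarith
  -- pointwise bound
  have hpt : ∀ x, p x * Real.log (p x / q x) - (p x - q x)
      ≤ α * (Real.sqrt (p x) - Real.sqrt (q x)) ^ 2 := fun x =>
    aux_kl_pointwise c (p x) (q x) (hp0 x) (hq0 x) (hle x)
  have hpq : Integrable (fun x => p x - q x) ν := hpi.sub hqi
  have hmono : ∫ x, (p x * Real.log (p x / q x) - (p x - q x)) ∂ν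
      ≤ ∫ x, α * (Real.sqrt (p x) - Real.sqrt (q x)) ^ 2 ∂ν :=
    integral_mono (hint.sub hpq) (hHint.const_mul α) hpt
  have heq1 : ∫ x, (p x * Real.log (p x / q x) - (p x - q x)) ∂ν
      = ∫ x, p x * Real.log (p x / q x) ∂ν := by
    rw [integral_sub hint hpq, integral_sub hpi hqi, hP, hQ]
    ring
  have heq2 : ∫ x, α * (Real.sqrt (p x) - Real.sqrt (q x)) ^ 2 ∂ν
      = α * ∫ x, (Real.sqrt (p x) - Real.sqrt (q x)) ^ 2 ∂ν :=
    integral_const_mul α _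
  rw [heq1, heq2] at hmono
  exact hmono
end

section
/- Upper bound half of the dimension limit: if dim_{P_Π}(π*) exists, then limsup_{ε→0} (−log E_Π[e^{−(Δ_H^{1/2}(π,π*)/ε)²}]) / (2 log(1/ε)) ≤ dim_{P_Π}(π*)/2, which follows from the bound −log E_Π[e^{−(Δ_H^{1/2}(π,π*)/ε)²}] ≤ −log P_Π(B_ε(π*)) + 1. -/
open MeasureTheory Real Filter Metric

private lemma limsup_eq_zero_of_tendsto_atTop' {f : ℝ → ℝ} {l : Filter ℝ} [l.NeBot]
    (h : Tendsto f l atTop) : Filter.limsup f l = 0 := by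
  rw [Filter.limsup_eq]
  have : {a : ℝ | ∀ᶠ n in l, f n ≤ a} = ∅ := by
    ext a
    simp only [Set.mem_setOf_eq, Set.mem_empty_iff_false, iff_false]
    intro ha
    have hb : ∀ᶠ n in l, a + 1 ≤ f n := h.eventually_ge_atTop (a + 1)
    obtain ⟨n, h1, h2⟩ := (ha.and hb).exists
    linarith
  rw [this, Real.sInf_empty]

/-- upper bound half of the dimension limit: if the local metric dimension
dim_{P_Π}(π*) exists (balls in the Hellinger metric, Δ_H^{1/2} = dist), then
limsup_{ε→0⁺} (−log E_Π[e^{−(dist(π,π*)/ε)²}]) / (2 log(1/ε)) ≤ dim_{P_Π}(π*)/2. -/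
theorem limsup_neg_log_exp_le_half_dim
    {Pi : Type*} [MetricSpace Pi] [MeasurableSpace Pi] [BorelSpace Pi]
    (PPi : Measure Pi) [IsProbabilityMeasure PPi]
    (prs : Pi) (d : ℝ)
    (hdim : Tendsto
      (fun ε : ℝ => -Real.log (PPi (Metric.closedBall prs ε)).toReal / Real.log (1 / ε))
      (nhdsWithin 0 (Set.Ioi 0)) (nhds d)) :
    Filter.limsup
      (fun ε : ℝ =>
        -Real.log (∫ pr, Real.exp (-(dist pr prs / ε) ^ 2) ∂PPi) /
          (2 * Real.log (1 / ε)))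
      (nhdsWithin 0 (Set.Ioi 0)) ≤ d / 2 := by
  set F : ℝ → ℝ := fun ε =>
    -Real.log (∫ pr, Real.exp (-(dist pr prs / ε) ^ 2) ∂PPi) / (2 * Real.log (1 / ε)) with hF
  set I : ℝ → ℝ := fun ε => ∫ pr, Real.exp (-(dist pr prs / ε) ^ 2) ∂PPi with hI
  -- basic facts about I
  have hint : ∀ ε : ℝ, Integrable (fun pr => Real.exp (-(dist pr prs / ε) ^ 2)) PPi := by
    intro ε
    refine Integrable.mono' (integrable_const 1) ?_ ?_
    · exact (Real.continuous_exp.comp (by continuity)).aestronglyMeasurable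
    · refine Eventually.of_forall fun pr => ?_
      rw [Real.norm_eq_abs, abs_of_pos (Real.exp_pos _)]
      exact Real.exp_le_one_iff.2 (neg_nonpos.2 (sq_nonneg _))
  have hIpos : ∀ ε : ℝ, 0 < I ε := by
    intro ε
    rw [hI]
    rw [integral_pos_iff_support_of_nonneg (fun pr => (Real.exp_pos _).le) (hint ε)]
    have : (Function.support fun pr => Real.exp (-(dist pr prs / ε) ^ 2)) = Set.univ := by
      ext pr; simp [Function.mem_support, (Real.exp_pos _).ne']
    rw [this]
    simp
  have hIle1 : ∀ ε : ℝ, I ε ≤ 1 := by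
    intro ε
    have := integral_mono_ae (hint ε) (integrable_const 1)
      (Eventually.of_forall fun pr => Real.exp_le_one_iff.2 (neg_nonpos.2 (sq_nonneg _)))
    simpa using this
  have hFnn : ∀ᶠ ε in nhdsWithin (0:ℝ) (Set.Ioi 0), 0 ≤ F ε := by
    filter_upwards [Ioo_mem_nhdsGT_of_mem (by norm_num : (0:ℝ) ∈ Set.Ico (0:ℝ) 1)]
      with ε hε
    have hL : 0 < Real.log (1 / ε) :=
      Real.log_pos (by rw [lt_div_iff₀ hε.1]; linarith [hε.2])
    exact div_nonneg (by simpa using Real.log_nonpos (hIpos ε).le (hIle1 ε)) (by linarith)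
  by_cases hpos : ∀ ε : ℝ, 0 < ε → PPi (Metric.closedBall prs ε) ≠ 0
  · -- Case A : all balls have positive measure
    set G : ℝ → ℝ := fun ε =>
      (1 - Real.log (PPi (Metric.closedBall prs ε)).toReal) / (2 * Real.log (1 / ε)) with hG
    have hPpos : ∀ ε : ℝ, 0 < ε → 0 < (PPi (Metric.closedBall prs ε)).toReal := by
      intro ε hε
      exact ENNReal.toReal_pos (hpos ε hε) (measure_ne_top _ _)
    have hIge : ∀ ε : ℝ, 0 < ε →
        Real.exp (-1) * (PPi (Metric.closedBall prs ε)).toReal ≤ I ε := by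
      intro ε hε
      have h1 : ∫ pr in Metric.closedBall prs ε, Real.exp (-1) ∂PPi
          ≤ ∫ pr in Metric.closedBall prs ε, Real.exp (-(dist pr prs / ε) ^ 2) ∂PPi := by
        refine setIntegral_mono_on (integrable_const _).integrableOn
          (hint ε).integrableOn measurableSet_closedBall ?_
        intro pr hpr
        apply Real.exp_le_exp.2
        rw [neg_le_neg_iff]
        have h2 : 0 ≤ dist pr prs / ε := by positivity
        have h3 : dist pr prs / ε ≤ 1 := by
          rw [div_le_one hε]; exact hpr
        nlinarith
      have h2 : ∫ pr in Metric.closedBall prs ε, Real.exp (-(dist pr prs / ε) ^ 2) ∂PPi ≤ I ε :=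
        setIntegral_le_integral (hint ε) (Eventually.of_forall fun pr => (Real.exp_pos _).le)
      rw [setIntegral_const, smul_eq_mul, mul_comm, measureReal_def] at h1
      linarith
    have hFG : ∀ᶠ ε in nhdsWithin (0:ℝ) (Set.Ioi 0), F ε ≤ G ε := by
      filter_upwards [Ioo_mem_nhdsGT_of_mem (by norm_num : (0:ℝ) ∈ Set.Ico (0:ℝ) 1)]
        with ε hε
      have hL : 0 < Real.log (1 / ε) :=
        Real.log_pos (by rw [lt_div_iff₀ hε.1]; linarith [hε.2])
      have hnum : -Real.log (I ε) ≤ 1 - Real.log (PPi (Metric.closedBall prs ε)).toReal := by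
        have := Real.log_le_log (mul_pos (Real.exp_pos _) (hPpos ε hε.1)) (hIge ε hε.1)
        rw [Real.log_mul (Real.exp_pos _).ne' (hPpos ε hε.1).ne', Real.log_exp] at this
        linarith
      exact div_le_div_of_nonneg_right hnum (by linarith) |>.trans_eq rfl
    have hGlim : Tendsto G (nhdsWithin (0:ℝ) (Set.Ioi 0)) (nhds (d / 2)) := by
      have hLtop : Tendsto (fun ε : ℝ => Real.log (1 / ε)) (nhdsWithin (0:ℝ) (Set.Ioi 0)) atTop := by
        have : Tendsto (fun ε : ℝ => 1 / ε) (nhdsWithin (0:ℝ) (Set.Ioi 0)) atTop := by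
          simpa [one_div] using tendsto_inv_nhdsGT_zero (𝕜 := ℝ)
        exact Real.tendsto_log_atTop.comp this
      have h1 : Tendsto (fun ε : ℝ => 1 / Real.log (1 / ε)) (nhdsWithin (0:ℝ) (Set.Ioi 0))
          (nhds 0) := by
        exact hLtop.inv_tendsto_atTop.congr (fun ε => by simp [one_div])
      have h2 : Tendsto (fun ε : ℝ =>
          (1 / Real.log (1 / ε) +
            -Real.log (PPi (Metric.closedBall prs ε)).toReal / Real.log (1 / ε)) / 2)
          (nhdsWithin (0:ℝ) (Set.Ioi 0)) (nhds ((0 + d) / 2)) :=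
        (h1.add hdim).div_const 2
      rw [zero_add] at h2
      refine h2.congr' ?_
      filter_upwards [Ioo_mem_nhdsGT_of_mem (by norm_num : (0:ℝ) ∈ Set.Ico (0:ℝ) 1)]
        with ε hε
      have hL : Real.log (1 / ε) ≠ 0 :=
        (Real.log_pos (by rw [lt_div_iff₀ hε.1]; linarith [hε.2])).ne'
      rw [hG]
      field_simp
      ring
    calc Filter.limsup F (nhdsWithin (0:ℝ) (Set.Ioi 0))
        ≤ Filter.limsup G (nhdsWithin (0:ℝ) (Set.Ioi 0)) := by
          refine limsup_le_limsup hFG ?_ ?_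
          · exact (isBoundedUnder_of_eventually_ge hFnn).isCoboundedUnder_flip
          · exact hGlim.isBoundedUnder_le
      _ = d / 2 := hGlim.limsup_eq
  · -- Case B : some ball is null
    push_neg at hpos
    obtain ⟨ε0, hε0, hnull⟩ := hpos
    -- d = 0
    have hd0 : d = 0 := by
      have hzero : (fun ε : ℝ =>
          -Real.log (PPi (Metric.closedBall prs ε)).toReal / Real.log (1 / ε))
          =ᶠ[nhdsWithin (0:ℝ) (Set.Ioi 0)] fun _ => (0:ℝ) := by
        filter_upwards [Ioo_mem_nhdsGT_of_mem (Set.mem_Ico.2 ⟨le_refl (0:ℝ), hε0⟩)]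
          with ε hε
        have : PPi (Metric.closedBall prs ε) = 0 :=
          le_antisymm (hnull ▸ measure_mono (closedBall_subset_closedBall hε.2.le)) zero_le
        simp [this]
      exact tendsto_nhds_unique (hdim.congr' hzero) tendsto_const_nhds
    rw [hd0, zero_div]
    -- F tends to atTop
    have hae : ∀ᵐ pr ∂PPi, ε0 < dist pr prs := by
      have : ∀ᵐ pr ∂PPi, pr ∉ Metric.closedBall prs ε0 :=
        (ae_iff).2 (by simpa [Metric.closedBall] using hnull)
      filter_upwards [this] with pr hpr
      simpa [Metric.mem_closedBall, not_le] using hpr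
    have hIub : ∀ ε : ℝ, 0 < ε → I ε ≤ Real.exp (-(ε0 / ε) ^ 2) := by
      intro ε hε
      have := integral_mono_ae (hint ε) (integrable_const (Real.exp (-(ε0 / ε) ^ 2))) ?_
      · simpa using this
      · filter_upwards [hae] with pr hpr
        apply Real.exp_le_exp.2
        rw [neg_le_neg_iff]
        have h1 : 0 ≤ ε0 / ε := by positivity
        have h2 : ε0 / ε ≤ dist pr prs / ε := by
          gcongr
        nlinarith
    have hFlb : ∀ᶠ ε in nhdsWithin (0:ℝ) (Set.Ioi 0), ε0 ^ 2 / 2 * (1 / ε) ≤ F ε := by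
      filter_upwards [Ioo_mem_nhdsGT_of_mem
        (Set.mem_Ico.2 ⟨le_refl (0:ℝ), lt_min hε0 one_pos⟩)] with ε hε
      obtain ⟨hε1, hε2⟩ := hε
      have hεlt1 : ε < 1 := hε2.trans_le (min_le_right _ _)
      have hL : 0 < Real.log (1 / ε) :=
        Real.log_pos (by rw [lt_div_iff₀ hε1]; linarith)
      have hLle : Real.log (1 / ε) ≤ 1 / ε := by
        have := Real.log_le_sub_one_of_pos (show (0:ℝ) < 1 / ε by positivity)
        linarith
      have hnum : (ε0 / ε) ^ 2 ≤ -Real.log (I ε) := by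
        have := Real.log_le_log (hIpos ε) (hIub ε hε1)
        rw [Real.log_exp] at this
        linarith
      have h1 : (ε0 / ε) ^ 2 / (2 * Real.log (1 / ε)) ≤ F ε :=
        div_le_div_of_nonneg_right hnum (by linarith) |>.trans_eq rfl
      refine le_trans ?_ h1
      rw [div_pow, div_div, le_div_iff₀ (by positivity)]
      have hle : ε ^ 2 * (2 * Real.log (1 / ε)) ≤ ε ^ 2 * (2 * (1 / ε)) :=
        mul_le_mul_of_nonneg_left (by linarith) (by positivity)
      calc ε0 ^ 2 / 2 * (1 / ε) * (ε ^ 2 * (2 * Real.log (1 / ε)))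
          ≤ ε0 ^ 2 / 2 * (1 / ε) * (ε ^ 2 * (2 * (1 / ε))) :=
            mul_le_mul_of_nonneg_left hle (by positivity)
        _ = ε0 ^ 2 := by field_simp
    have hFtop : Tendsto F (nhdsWithin (0:ℝ) (Set.Ioi 0)) atTop := by
      refine tendsto_atTop_mono' _ hFlb ?_
      have h1 : Tendsto (fun ε : ℝ => 1 / ε) (nhdsWithin (0:ℝ) (Set.Ioi 0)) atTop := by
        simpa [one_div] using tendsto_inv_nhdsGT_zero (𝕜 := ℝ)
      exact h1.const_mul_atTop (by positivity)
    rw [limsup_eq_zero_of_tendsto_atTop' hFtop]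
end
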